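/- Let μ be a Borel probability measure on [0,∞) with μ[x+h,∞) ≤ λ·μ[x,∞) for all x ≥ 0 (h > 0, λ ∈ [0,1)). Then for any non-decreasing g: ℝ → [0,∞) with g(0)=0, ∫g² dμ ≤ (2/(1−λ))² · ∫(g(x) − g(x−h))² dμ(x). -/

import Mathlib

open MeasureTheory Set Real
open scoped ENNReal


lemma ray_mono (c : ℝ) : Monotone (fun n : ℕ => Set.Ici (c + 1 / (n + 1))) := by
  intro m n hmn
  apply Set.Ici_subset_Ici.2
  have h1 : (1:ℝ) / (n + 1) ≤ 1 / (m + 1) := by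
    apply one_div_le_one_div_of_le
    · positivity
    · exact_mod_cast by omega
  linarith

lemma ray_union (c : ℝ) : Set.Ioi c = ⋃ n : ℕ, Set.Ici (c + 1 / (n + 1)) := by
  ext x
  simp only [Set.mem_Ioi, Set.mem_iUnion, Set.mem_Ici]
  constructor
  · intro hx
    obtain ⟨n, hn⟩ := exists_nat_one_div_lt (show (0:ℝ) < x - c by linarith)
    exact ⟨n, by linarith⟩
  · rintro ⟨n, hn⟩
    have : (0:ℝ) < 1 / (n + 1) := by positivity
    linarith

lemma tail_Ioi (μ : Measure ℝ) (h l : ℝ)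
    (htail : ∀ x : ℝ, 0 ≤ x → μ (Set.Ici (x + h)) ≤ ENNReal.ofReal l * μ (Set.Ici x))
    (b : ℝ) (hb : 0 ≤ b) :
    μ (Set.Ioi (b + h)) ≤ ENNReal.ofReal l * μ (Set.Ioi b) := by
  have key : μ (Set.Ioi (b + h)) = ⨆ n : ℕ, μ (Set.Ici (b + h + 1 / (n + 1))) := by
    rw [ray_union (b + h)]
    exact ((ray_mono (b+h)).directed_le).measure_iUnion
  rw [key]
  apply iSup_le
  intro n
  have hpos : (0:ℝ) < 1 / (n + 1) := by positivity
  have h1 : μ (Set.Ici (b + h + 1 / (n + 1))) ≤ ENNReal.ofReal l * μ (Set.Ici (b + 1 / (n + 1))) := by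
    have := htail (b + 1 / (n + 1)) (by linarith)
    calc μ (Set.Ici (b + h + 1 / (n + 1))) = μ (Set.Ici (b + 1 / (n + 1) + h)) := by ring_nf
      _ ≤ _ := this
  refine h1.trans (mul_le_mul_right (measure_mono ?_) _)
  exact fun x hx => lt_of_lt_of_le (show b < b + 1 / (n + 1) by linarith) hx

/-- Shift of an upper set contained in `[0, ∞)` loses a factor `l` in measure. -/
lemma shift_upper (μ : Measure ℝ) (h l : ℝ)
    (htail : ∀ x : ℝ, 0 ≤ x → μ (Set.Ici (x + h)) ≤ ENNReal.ofReal l * μ (Set.Ici x))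
    (S : Set ℝ) (hup : ∀ ⦃x y⦄, x ∈ S → x ≤ y → y ∈ S) (hS0 : S ⊆ Set.Ici 0) :
    μ {x | x - h ∈ S} ≤ ENNReal.ofReal l * μ S := by
  rcases S.eq_empty_or_nonempty with rfl | hne
  · simp
  have hbdd : BddBelow S := ⟨0, fun x hx => hS0 hx⟩
  set a := sInf S with ha
  have ha0 : 0 ≤ a := le_csInf hne (fun x hx => hS0 hx)
  by_cases haS : a ∈ S
  · have hSeq : S = Set.Ici a := by
      ext x
      exact ⟨fun hx => csInf_le hbdd hx, fun hx => hup haS hx⟩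
    have hpre : {x : ℝ | x - h ∈ S} = Set.Ici (a + h) := by
      rw [hSeq]; ext x; simp only [Set.mem_setOf_eq, Set.mem_Ici]; constructor <;> intro <;> linarith
    rw [hpre, hSeq]
    exact htail a ha0
  · have hSeq : S = Set.Ioi a := by
      ext x
      constructor
      · intro hx
        rcases lt_or_eq_of_le (csInf_le hbdd hx) with h' | h'
        · exact h'
        · exact absurd (show a ∈ S by rw [ha, h']; exact hx) haS
      · intro hx
        obtain ⟨s, hsS, hs⟩ := exists_lt_of_csInf_lt hne hx
        exact hup hsS hs.le
    have hpre : {x : ℝ | x - h ∈ S} = Set.Ioi (a + h) := by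
      rw [hSeq]; ext x; simp only [Set.mem_setOf_eq, Set.mem_Ioi]; constructor <;> intro <;> linarith
    rw [hpre, hSeq]
    exact tail_Ioi μ h l htail a ha0

/-- Layer-cake: shifting a monotone nonneg function vanishing on `(-∞,0]` loses factor `l`. -/
lemma shift_lintegral (μ : Measure ℝ) (h l : ℝ) (hl0 : 0 ≤ l)
    (htail : ∀ x : ℝ, 0 ≤ x → μ (Set.Ici (x + h)) ≤ ENNReal.ofReal l * μ (Set.Ici x))
    (F : ℝ → ℝ) (hF : Monotone F) (hF0 : ∀ x, 0 ≤ F x) (hFz : ∀ x ≤ 0, F x = 0) :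
    ∫⁻ x, ENNReal.ofReal (F (x - h)) ∂μ ≤ ENNReal.ofReal l * ∫⁻ x, ENNReal.ofReal (F x) ∂μ := by
  have hFm : Measurable F := hF.measurable
  have hFhm : Measurable (fun x : ℝ => F (x - h)) := hFm.comp (measurable_id.sub_const h)
  rw [MeasureTheory.lintegral_eq_lintegral_meas_lt μ
      (Filter.Eventually.of_forall (fun x => hF0 _)) hFhm.aemeasurable,
    MeasureTheory.lintegral_eq_lintegral_meas_lt μ
      (Filter.Eventually.of_forall (fun x => hF0 _)) hFm.aemeasurable]
  rw [← MeasureTheory.lintegral_const_mul' _ _ ENNReal.ofReal_ne_top]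
  apply MeasureTheory.setLIntegral_mono' measurableSet_Ioi
  intro t ht
  have ht : (0:ℝ) < t := ht
  have hup : ∀ ⦃x y : ℝ⦄, x ∈ {a : ℝ | t < F a} → x ≤ y → y ∈ {a : ℝ | t < F a} :=
    fun x y hx hxy => lt_of_lt_of_le hx (hF hxy)
  have hS0 : {a : ℝ | t < F a} ⊆ Set.Ici 0 := by
    intro x hx
    simp only [Set.mem_Ici]
    by_contra hx0
    push_neg at hx0
    have : F x = 0 := hFz x (le_of_lt hx0)
    simp only [Set.mem_setOf_eq, this] at hx
    linarith
  exact shift_upper μ h l htail {a : ℝ | t < F a} hup hS0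

lemma real_const_ineq (l : ℝ) (hl0 : 0 ≤ l) (hl1 : l < 1) :
    ((1 - Real.sqrt l) ^ 2)⁻¹ ≤ (2 / (1 - l)) ^ 2 := by
  set s := Real.sqrt l with hs
  have hsq : s ^ 2 = l := Real.sq_sqrt hl0
  have hs0 : 0 ≤ s := Real.sqrt_nonneg l
  have hs1 : s < 1 := by
    nlinarith [hsq]
  have h1 : (0:ℝ) < 1 - s := by linarith
  have h2 : (0:ℝ) < 1 - l := by linarith
  rw [inv_eq_one_div, div_pow, div_le_div_iff₀ (by positivity) (by positivity)]
  nlinarith [mul_nonneg (mul_nonneg (sq_nonneg (1 - s)) h1.le) (show (0:ℝ) ≤ 3 + s by linarith)]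

lemma bounded_case (μ : Measure ℝ) [IsProbabilityMeasure μ]
    (h l : ℝ) (hh : 0 < h) (hl0 : 0 ≤ l) (hl1 : l < 1)
    (htail : ∀ x : ℝ, 0 ≤ x → μ (Set.Ici (x + h)) ≤ ENNReal.ofReal l * μ (Set.Ici x))
    (g : ℝ → ℝ) (hg : Monotone g) (hg0 : ∀ x, 0 ≤ g x) (hgz : g 0 = 0)
    (M : ℝ) (hbd : ∀ x, g x ≤ M) :
    ∫⁻ x, ENNReal.ofReal ((g x) ^ 2) ∂μ ≤
      ENNReal.ofReal ((2 / (1 - l)) ^ 2) *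
        ∫⁻ x, ENNReal.ofReal ((g x - g (x - h)) ^ 2) ∂μ := by
  have hgneg : ∀ x ≤ 0, g x = 0 := fun x hx => le_antisymm (hgz ▸ hg hx) (hg0 x)
  have hgm : Measurable g := hg.measurable
  -- bridge between ofReal (r^2) and (ofReal r)^(2:ℝ)
  have hbr : ∀ r : ℝ, 0 ≤ r → ENNReal.ofReal (r ^ 2) = ENNReal.ofReal r ^ (2:ℝ) := by
    intro r hr
    rw [ENNReal.ofReal_rpow_of_nonneg hr (by norm_num)]
    norm_num
  set G : ℝ → ℝ≥0∞ := fun x => ENNReal.ofReal (g x) with hG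
  set Gh : ℝ → ℝ≥0∞ := fun x => ENNReal.ofReal (g (x - h)) with hGh
  set D : ℝ → ℝ≥0∞ := fun x => ENNReal.ofReal (g x - g (x - h)) with hD
  have hGm : Measurable G := hgm.ennreal_ofReal
  have hGhm : Measurable Gh := (hgm.comp (measurable_id.sub_const h)).ennreal_ofReal
  have hDm : Measurable D := (hgm.sub (hgm.comp (measurable_id.sub_const h))).ennreal_ofReal
  have hle : ∀ x : ℝ, g (x - h) ≤ g x := fun x => hg (by linarith)
  have hdec : ∀ x, G x = D x + Gh x := by
    intro x
    rw [hG, hD, hGh]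
    rw [← ENNReal.ofReal_add (by linarith [hle x]) (hg0 _)]
    ring_nf
  set I := ∫⁻ x, G x ^ (2:ℝ) ∂μ with hI
  set D2 := ∫⁻ x, D x ^ (2:ℝ) ∂μ with hD2
  set J := ∫⁻ x, Gh x ^ (2:ℝ) ∂μ with hJ
  -- I is finite
  have hIfin : I ≠ ⊤ := by
    have : I ≤ ENNReal.ofReal M ^ (2:ℝ) * μ Set.univ := by
      rw [← MeasureTheory.lintegral_const]
      exact lintegral_mono fun x =>
        ENNReal.rpow_le_rpow (ENNReal.ofReal_le_ofReal (hbd x)) (by norm_num)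
    refine ne_top_of_le_ne_top ?_ this
    simp [ENNReal.rpow_lt_top_of_nonneg (by norm_num : (0:ℝ) ≤ 2) ENNReal.ofReal_ne_top |>.ne,
      measure_univ]
  -- shift bound : J ≤ l * I
  have hshift : J ≤ ENNReal.ofReal l * I := by
    have key := shift_lintegral μ h l hl0 htail (fun x => (g x) ^ 2)
      (fun x y hxy => pow_le_pow_left₀ (hg0 x) (hg hxy) 2)
      (fun x => sq_nonneg _) (fun x hx => by show g x ^ 2 = 0; rw [hgneg x hx]; ring)
    calc J = ∫⁻ x, ENNReal.ofReal ((g (x - h)) ^ 2) ∂μ := by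
            apply lintegral_congr; intro x; rw [hbr _ (hg0 _)]
      _ ≤ ENNReal.ofReal l * ∫⁻ x, ENNReal.ofReal ((g x) ^ 2) ∂μ := key
      _ = ENNReal.ofReal l * I := by
            congr 1; apply lintegral_congr; intro x; rw [hbr _ (hg0 _)]
  -- Minkowski
  have hmink : I ^ ((1:ℝ)/2) ≤ D2 ^ ((1:ℝ)/2) + J ^ ((1:ℝ)/2) := by
    have := ENNReal.lintegral_Lp_add_le (μ := μ) hDm.aemeasurable hGhm.aemeasurable
      (by norm_num : (1:ℝ) ≤ 2)
    calc I ^ ((1:ℝ)/2) = (∫⁻ x, (D + Gh) x ^ (2:ℝ) ∂μ) ^ ((1:ℝ)/2) := by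
          congr 1; apply lintegral_congr; intro x; simp only [Pi.add_apply]; rw [hdec x]
      _ ≤ _ := this
  -- combine
  set s : ℝ≥0∞ := ENNReal.ofReal (Real.sqrt l) with hsdef
  have hs_eq : ENNReal.ofReal l ^ ((1:ℝ)/2) = s := by
    rw [ENNReal.ofReal_rpow_of_nonneg hl0 (by norm_num), hsdef, Real.sqrt_eq_rpow]
  have hsl1 : Real.sqrt l < 1 := by
    nlinarith [Real.sq_sqrt hl0, Real.sqrt_nonneg l]
  have hy : I ^ ((1:ℝ)/2) ≤ D2 ^ ((1:ℝ)/2) + s * I ^ ((1:ℝ)/2) := by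
    refine hmink.trans (add_le_add_right ?_ _)
    calc J ^ ((1:ℝ)/2) ≤ (ENNReal.ofReal l * I) ^ ((1:ℝ)/2) :=
          ENNReal.rpow_le_rpow hshift (by norm_num)
      _ = s * I ^ ((1:ℝ)/2) := by rw [ENNReal.mul_rpow_of_nonneg _ _ (by norm_num), hs_eq]
  set y := I ^ ((1:ℝ)/2) with hydef
  have hyfin : y ≠ ⊤ := (ENNReal.rpow_lt_top_of_nonneg (by norm_num) hIfin).ne
  have hones : (1:ℝ≥0∞) - s = ENNReal.ofReal (1 - Real.sqrt l) := by
    rw [ENNReal.ofReal_sub _ (Real.sqrt_nonneg l), ENNReal.ofReal_one]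
  have h1s_pos : (0:ℝ) < 1 - Real.sqrt l := by linarith
  have h1s_ne0 : (1:ℝ≥0∞) - s ≠ 0 := by
    rw [hones]; simp [ENNReal.ofReal_eq_zero]; linarith
  have h1s_netop : (1:ℝ≥0∞) - s ≠ ⊤ := by rw [hones]; exact ENNReal.ofReal_ne_top
  have hstep : ((1:ℝ≥0∞) - s) * y ≤ D2 ^ ((1:ℝ)/2) := by
    rw [ENNReal.sub_mul (fun _ _ => hyfin), one_mul]
    exact tsub_le_iff_right.mpr hy
  have hydiv : y ≤ D2 ^ ((1:ℝ)/2) / ((1:ℝ≥0∞) - s) := by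
    rw [ENNReal.le_div_iff_mul_le (Or.inl h1s_ne0) (Or.inl h1s_netop)]
    rwa [mul_comm]
  -- square it
  have hyI : y ^ (2:ℝ) = I := by
    rw [hydef, ← ENNReal.rpow_mul]; norm_num
  have hD2sq : (D2 ^ ((1:ℝ)/2)) ^ (2:ℝ) = D2 := by
    rw [← ENNReal.rpow_mul]; norm_num
  have hfinal : I ≤ D2 / ((1:ℝ≥0∞) - s) ^ (2:ℝ) := by
    calc I = y ^ (2:ℝ) := hyI.symm
      _ ≤ (D2 ^ ((1:ℝ)/2) / ((1:ℝ≥0∞) - s)) ^ (2:ℝ) :=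
          ENNReal.rpow_le_rpow hydiv (by norm_num)
      _ = D2 / ((1:ℝ≥0∞) - s) ^ (2:ℝ) := by
          rw [ENNReal.div_rpow_of_nonneg _ _ (by norm_num : (0:ℝ) ≤ 2), hD2sq]
  have hconst : ((1:ℝ≥0∞) - s) ^ (2:ℝ) = ENNReal.ofReal ((1 - Real.sqrt l) ^ 2) := by
    rw [hones, ENNReal.ofReal_rpow_of_nonneg h1s_pos.le (by norm_num : (0:ℝ) ≤ 2)]
    norm_num
  have hfinal2 : I ≤ ENNReal.ofReal ((2/(1-l))^2) * D2 := by
    rw [hconst] at hfinal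
    calc I ≤ D2 / ENNReal.ofReal ((1 - Real.sqrt l) ^ 2) := hfinal
      _ = ENNReal.ofReal (((1 - Real.sqrt l) ^ 2)⁻¹) * D2 := by
          rw [ENNReal.ofReal_inv_of_pos (by positivity), div_eq_mul_inv, mul_comm]
      _ ≤ ENNReal.ofReal ((2/(1-l))^2) * D2 :=
          mul_le_mul_left (ENNReal.ofReal_le_ofReal (real_const_ineq l hl0 hl1)) _
  calc ∫⁻ x, ENNReal.ofReal ((g x) ^ 2) ∂μ = I := by
        apply lintegral_congr; intro x; rw [hbr _ (hg0 _)]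
    _ ≤ ENNReal.ofReal ((2/(1-l))^2) * D2 := hfinal2
    _ = _ := by
        congr 1; apply lintegral_congr; intro x
        rw [hbr _ (by linarith [hle x] : (0:ℝ) ≤ g x - g (x - h))]

theorem stmt1 (μ : Measure ℝ) [IsProbabilityMeasure μ]
    (h l : ℝ) (hh : 0 < h) (hl0 : 0 ≤ l) (hl1 : l < 1)
    (hsupp : μ (Set.Iio 0) = 0)
    (htail : ∀ x : ℝ, 0 ≤ x → μ (Set.Ici (x + h)) ≤ ENNReal.ofReal l * μ (Set.Ici x))
    (g : ℝ → ℝ) (hg : Monotone g) (hg0 : ∀ x, 0 ≤ g x) (hgz : g 0 = 0) :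
    ∫⁻ x, ENNReal.ofReal ((g x) ^ 2) ∂μ ≤
      ENNReal.ofReal ((2 / (1 - l)) ^ 2) *
        ∫⁻ x, ENNReal.ofReal ((g x - g (x - h)) ^ 2) ∂μ := by
  set gn : ℕ → ℝ → ℝ := fun n x => min (g x) (n : ℝ) with hgn
  have hgnm : ∀ n, Monotone (gn n) := fun n => hg.min monotone_const
  have hgn0 : ∀ n x, 0 ≤ gn n x := fun n x => le_min (hg0 x) (by positivity)
  have hgnz : ∀ n, gn n 0 = 0 := fun n => by simp [hgn, hgz]
  have hgnbd : ∀ n x, gn n x ≤ (n : ℝ) := fun n x => min_le_right _ _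
  -- the difference of the truncation is dominated by the original difference
  have hdiff : ∀ n x, gn n x - gn n (x - h) ≤ g x - g (x - h) := by
    intro n x
    have hle : g (x - h) ≤ g x := hg (by linarith)
    simp only [hgn]
    rcases le_total (g (x - h)) (n : ℝ) with h1 | h1
    · rw [min_eq_left h1]
      have : min (g x) (n:ℝ) ≤ g x := min_le_left _ _
      linarith
    · rw [min_eq_right h1, min_eq_right (le_trans h1 hle)]
      linarith
  have hdiffnn : ∀ n x, 0 ≤ gn n x - gn n (x - h) :=
    fun n x => sub_nonneg.2 (hgnm n (by linarith))
  -- RHS domination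
  have hrhs : ∀ n, ∫⁻ x, ENNReal.ofReal ((gn n x - gn n (x - h)) ^ 2) ∂μ ≤
      ∫⁻ x, ENNReal.ofReal ((g x - g (x - h)) ^ 2) ∂μ := by
    intro n
    apply lintegral_mono
    intro x
    apply ENNReal.ofReal_le_ofReal
    exact pow_le_pow_left₀ (hdiffnn n x) (hdiff n x) 2
  -- each truncation satisfies the bound
  have hbdd : ∀ n, ∫⁻ x, ENNReal.ofReal ((gn n x) ^ 2) ∂μ ≤
      ENNReal.ofReal ((2 / (1 - l)) ^ 2) *
        ∫⁻ x, ENNReal.ofReal ((g x - g (x - h)) ^ 2) ∂μ := by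
    intro n
    exact (bounded_case μ h l hh hl0 hl1 htail (gn n) (hgnm n) (hgn0 n) (hgnz n)
      (n : ℝ) (hgnbd n)).trans (mul_le_mul_right (hrhs n) _)
  -- monotone convergence
  have hmct : ∫⁻ x, ENNReal.ofReal ((g x) ^ 2) ∂μ =
      ⨆ n, ∫⁻ x, ENNReal.ofReal ((gn n x) ^ 2) ∂μ := by
    rw [← lintegral_iSup]
    · apply lintegral_congr
      intro x
      apply le_antisymm
      · apply le_iSup_of_le (Nat.ceil (g x))
        apply ENNReal.ofReal_le_ofReal
        rw [hgn]
        simp only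
        rw [min_eq_left (Nat.le_ceil (g x))]
      · apply iSup_le
        intro n
        apply ENNReal.ofReal_le_ofReal
        exact pow_le_pow_left₀ (hgn0 n x) (min_le_left _ _) 2
    · intro n
      exact ((((hgnm n).measurable).pow_const 2).ennreal_ofReal)
    · intro m n hmn x
      apply ENNReal.ofReal_le_ofReal
      apply pow_le_pow_left₀ (hgn0 m x)
      exact min_le_min le_rfl (by exact_mod_cast hmn)
  rw [hmct]
  exact iSup_le hbdd
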